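/- Let n ≥ 1 and let V ∈ ℝ^{2n×2n} be a symmetric positive-definite matrix such that the complex matrix V + iΩ is positive semidefinite. Then Ω V Ωᵀ − V⁻¹ is positive semidefinite (i.e. V⁻¹ ⪯ Ω V Ωᵀ in the Loewner order). Consequently, the operator norms satisfy ‖V⁻¹‖ ≤ ‖V‖, and the condition number K(V) := ‖V‖·‖V⁻¹‖ satisfies K(V) ≤ ‖V‖². -/

import Mathlib

open scoped BigOperators
open Matrix
open scoped ComplexOrder
open scoped RealInnerProductSpace

section Aux

set_option linter.unusedSectionVars false

open scoped MatrixOrder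

variable {m : Type*} [Fintype m] [DecidableEq m]

lemma aux_dot_eq_inner (A : Matrix m m ℝ) (x y : m → ℝ) :
    x ⬝ᵥ A *ᵥ y =
      ⟪(WithLp.equiv 2 (m → ℝ)).symm x,
        Matrix.toEuclideanCLM (𝕜 := ℝ) A ((WithLp.equiv 2 (m → ℝ)).symm y)⟫ := by
  simp only [WithLp.equiv_symm_apply, Matrix.toEuclideanCLM_toLp]
  simp [PiLp.inner_apply, dotProduct, Matrix.toLin'_apply, mul_comm]

lemma aux_norm_sq_eq_dot (x : m → ℝ) :
    ‖(WithLp.equiv 2 (m → ℝ)).symm x‖ ^ 2 = x ⬝ᵥ x := by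
  rw [← real_inner_self_eq_norm_sq]
  simp [EuclideanSpace.real_norm_sq_eq, dotProduct, ← sq]

lemma aux_clm_norm_le_of_rayleigh (A : Matrix m m ℝ) (hA : A.PosSemidef) (c : ℝ) (hc : 0 ≤ c)
    (h : ∀ x : m → ℝ, x ⬝ᵥ A *ᵥ x ≤ c * (x ⬝ᵥ x)) :
    ‖Matrix.toEuclideanCLM (𝕜 := ℝ) A‖ ≤ c := by
  set T := Matrix.toEuclideanCLM (𝕜 := ℝ) A with hT
  set S := Matrix.toEuclideanCLM (𝕜 := ℝ) (CFC.sqrt A) with hSdef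
  have hTS : T = S * S := by
    rw [hT, hSdef, ← _root_.map_mul, CFC.sqrt_mul_sqrt_self A hA.nonneg]
  have hSsa : star S = S := by
    rw [hSdef, ← map_star (Matrix.toEuclideanCLM (𝕜 := ℝ))]
    congr 1
    exact (CFC.sqrt_nonneg A).posSemidef.isHermitian
  have hray : ∀ x : EuclideanSpace ℝ m, ⟪x, T x⟫ ≤ c * ‖x‖ ^ 2 := by
    intro x
    have h1 := h (WithLp.equiv 2 (m → ℝ) x)
    rw [aux_dot_eq_inner] at h1
    rw [← aux_norm_sq_eq_dot] at h1
    simpa using h1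
  have hS : ‖S‖ ≤ Real.sqrt c := by
    refine ContinuousLinearMap.opNorm_le_bound _ (Real.sqrt_nonneg c) fun x => ?_
    have h1 : ‖S x‖ ^ 2 ≤ c * ‖x‖ ^ 2 := by
      have e1 : ‖S x‖ ^ 2 = ⟪x, T x⟫ := by
        rw [← real_inner_self_eq_norm_sq, hTS]
        calc ⟪S x, S x⟫ = ⟪x, ContinuousLinearMap.adjoint S (S x)⟫ := by
              rw [ContinuousLinearMap.adjoint_inner_right]
          _ = ⟪x, (S * S) x⟫ := by
              rw [← ContinuousLinearMap.star_eq_adjoint, hSsa]; rfl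
      rw [e1]; exact hray x
    calc ‖S x‖ = Real.sqrt (‖S x‖ ^ 2) := (Real.sqrt_sq (norm_nonneg _)).symm
      _ ≤ Real.sqrt (c * ‖x‖ ^ 2) := Real.sqrt_le_sqrt h1
      _ = Real.sqrt c * ‖x‖ := by
          rw [Real.sqrt_mul hc, Real.sqrt_sq (norm_nonneg _)]
  calc ‖T‖ = ‖S * S‖ := by rw [hTS]
    _ ≤ ‖S‖ * ‖S‖ := norm_mul_le _ _
    _ ≤ Real.sqrt c * Real.sqrt c :=
        mul_le_mul hS hS (norm_nonneg _) (Real.sqrt_nonneg _)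
    _ = c := Real.mul_self_sqrt hc

lemma aux_rayleigh_le_norm (A : Matrix m m ℝ) (x : m → ℝ) :
    x ⬝ᵥ A *ᵥ x ≤ ‖Matrix.toEuclideanCLM (𝕜 := ℝ) A‖ * (x ⬝ᵥ x) := by
  rw [aux_dot_eq_inner, ← aux_norm_sq_eq_dot]
  set T := Matrix.toEuclideanCLM (𝕜 := ℝ) A
  set y := (WithLp.equiv 2 (m → ℝ)).symm x
  calc ⟪y, T y⟫ ≤ ‖y‖ * ‖T y‖ := real_inner_le_norm _ _
    _ ≤ ‖y‖ * (‖T‖ * ‖y‖) := mul_le_mul_of_nonneg_left (T.le_opNorm y) (norm_nonneg _)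
    _ = ‖T‖ * ‖y‖ ^ 2 := by ring

lemma aux_cast_dot_cast (M : Matrix m m ℝ) (x y : m → ℝ) :
    (fun j => ((x j : ℂ))) ⬝ᵥ (M.map (Complex.ofReal ·) *ᵥ fun j => ((y j : ℂ)))
      = ((x ⬝ᵥ M *ᵥ y : ℝ) : ℂ) := by
  have hx : (fun j => ((x j : ℂ))) = Complex.ofRealHom ∘ x := rfl
  have hy : (fun j => ((y j : ℂ))) = Complex.ofRealHom ∘ y := rfl
  have hM : M.map (Complex.ofReal ·) = M.map Complex.ofRealHom := rfl
  rw [hx, hy, hM]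
  have h1 : M.map Complex.ofRealHom *ᵥ (Complex.ofRealHom ∘ y)
      = Complex.ofRealHom ∘ (M *ᵥ y) := by
    funext i
    exact (RingHom.map_mulVec _ _ _ i).symm
  rw [h1, ← RingHom.map_dotProduct]
  rfl

lemma aux_uncert_quad (V O : Matrix m m ℝ)
    (h : (V.map (Complex.ofReal ·) + Complex.I • O.map (Complex.ofReal ·)).PosSemidef)
    (a b : m → ℝ) :
    0 ≤ a ⬝ᵥ V *ᵥ a + b ⬝ᵥ V *ᵥ b + (b ⬝ᵥ O *ᵥ a - a ⬝ᵥ O *ᵥ b) := by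
  set ca : m → ℂ := fun j => ((a j : ℂ)) with hca
  set cb : m → ℂ := fun j => ((b j : ℂ)) with hcb
  set z : m → ℂ := ca + Complex.I • cb with hzdef
  have h2 := h.dotProduct_mulVec_nonneg z
  have hstar : star z = ca - Complex.I • cb := by
    funext j
    simp [hzdef, hca, hcb, Complex.ext_iff]
  have hexpr : star z ⬝ᵥ ((V.map (Complex.ofReal ·) + Complex.I • O.map (Complex.ofReal ·)) *ᵥ z)
      = ((a ⬝ᵥ V *ᵥ a + b ⬝ᵥ V *ᵥ b + (b ⬝ᵥ O *ᵥ a - a ⬝ᵥ O *ᵥ b) : ℝ) : ℂ)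
        + ((a ⬝ᵥ V *ᵥ b - b ⬝ᵥ V *ᵥ a + a ⬝ᵥ O *ᵥ a + b ⬝ᵥ O *ᵥ b : ℝ) : ℂ) * Complex.I := by
    rw [hstar, hzdef]
    simp only [add_mulVec, smul_mulVec, mulVec_add, mulVec_smul,
      sub_dotProduct, dotProduct_add, dotProduct_smul, smul_dotProduct, smul_eq_mul]
    simp only [hca, hcb, aux_cast_dot_cast]
    push_cast
    ring_nf
    have hI3 : Complex.I ^ 3 = -Complex.I := by
      rw [(by norm_num : (3 : ℕ) = 2 + 1), pow_succ, Complex.I_sq]; ring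
    rw [Complex.I_sq, hI3]
    ring
  rw [hexpr] at h2
  have h3 := (Complex.le_def.mp h2).1
  simpa using h3

end Aux

/-- for a symmetric positive-definite `V ∈ ℝ^{2n×2n}` satisfying the
uncertainty relation `V + iΩ ⪰ 0` (with `Ω` the standard symplectic form), one has
`V⁻¹ ⪯ Ω V Ωᵀ`; consequently `‖V⁻¹‖ ≤ ‖V‖` (L² operator norms) and the condition
number satisfies `K(V) = ‖V‖·‖V⁻¹‖ ≤ ‖V‖²`. -/
theorem inv_le_symplectic_conj_of_uncertainty
    (n : ℕ) (hn : 1 ≤ n)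
    (V : Matrix (Fin n ⊕ Fin n) (Fin n ⊕ Fin n) ℝ)
    (hsymm : V.IsSymm) (hpos : V.PosDef)
    (huncert :
      (V.map (Complex.ofReal ·) +
        Complex.I • (Matrix.fromBlocks (0 : Matrix (Fin n) (Fin n) ℝ) 1 (-1) 0).map
          (Complex.ofReal ·)).PosSemidef) :
    ((Matrix.fromBlocks (0 : Matrix (Fin n) (Fin n) ℝ) 1 (-1) 0) * V *
        (Matrix.fromBlocks (0 : Matrix (Fin n) (Fin n) ℝ) 1 (-1) 0).transpose
      - V⁻¹).PosSemidef
    ∧ ‖Matrix.toEuclideanCLM (𝕜 := ℝ) V⁻¹‖ ≤ ‖Matrix.toEuclideanCLM (𝕜 := ℝ) V‖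
    ∧ ‖Matrix.toEuclideanCLM (𝕜 := ℝ) V‖ * ‖Matrix.toEuclideanCLM (𝕜 := ℝ) V⁻¹‖ ≤
        ‖Matrix.toEuclideanCLM (𝕜 := ℝ) V‖ ^ 2 := by
  set Ω : Matrix (Fin n ⊕ Fin n) (Fin n ⊕ Fin n) ℝ :=
    Matrix.fromBlocks 0 1 (-1) 0 with hΩdef
  -- basic symplectic identities
  have hΩt : Ωᵀ = -Ω := by
    rw [hΩdef, Matrix.fromBlocks_transpose, Matrix.fromBlocks_neg]
    simp
  have hΩΩ : Ω * Ω = -1 := by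
    rw [hΩdef, Matrix.fromBlocks_multiply, ← Matrix.fromBlocks_one, Matrix.fromBlocks_neg]
    simp
  have hΩΩt : Ω * Ωᵀ = 1 := by
    rw [hΩt, Matrix.mul_neg, hΩΩ, neg_neg]
  -- inverse facts
  have hdet : IsUnit V.det := (Matrix.isUnit_iff_isUnit_det V).mp hpos.isUnit
  have hVVi : V * V⁻¹ = 1 := Matrix.mul_nonsing_inv V hdet
  have hViV : V⁻¹ * V = 1 := Matrix.nonsing_inv_mul V hdet
  -- the quadratic-form inequality coming from the uncertainty relation
  have hq := aux_uncert_quad V Ω huncert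
  -- the key pointwise inequality
  have hkey : ∀ x : (Fin n ⊕ Fin n) → ℝ,
      x ⬝ᵥ V⁻¹ *ᵥ x ≤ x ⬝ᵥ (Ω * V * Ωᵀ) *ᵥ x := by
    intro x
    have h0 := hq (V⁻¹ *ᵥ x) (Ωᵀ *ᵥ x)
    have e1 : (V⁻¹ *ᵥ x) ⬝ᵥ V *ᵥ (V⁻¹ *ᵥ x) = x ⬝ᵥ V⁻¹ *ᵥ x := by
      rw [Matrix.mulVec_mulVec, hVVi, Matrix.one_mulVec, dotProduct_comm]
    have e2 : (Ωᵀ *ᵥ x) ⬝ᵥ V *ᵥ (Ωᵀ *ᵥ x) = x ⬝ᵥ (Ω * V * Ωᵀ) *ᵥ x := by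
      calc (Ωᵀ *ᵥ x) ⬝ᵥ V *ᵥ (Ωᵀ *ᵥ x)
          = (x ᵥ* Ω) ⬝ᵥ ((V * Ωᵀ) *ᵥ x) := by
            rw [Matrix.mulVec_mulVec, Matrix.mulVec_transpose]
        _ = x ⬝ᵥ Ω *ᵥ ((V * Ωᵀ) *ᵥ x) := (Matrix.dotProduct_mulVec _ _ _).symm
        _ = x ⬝ᵥ (Ω * V * Ωᵀ) *ᵥ x := by
            rw [Matrix.mulVec_mulVec, ← Matrix.mul_assoc]
    have e3 : (Ωᵀ *ᵥ x) ⬝ᵥ Ω *ᵥ (V⁻¹ *ᵥ x) = -(x ⬝ᵥ V⁻¹ *ᵥ x) := by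
      calc (Ωᵀ *ᵥ x) ⬝ᵥ Ω *ᵥ (V⁻¹ *ᵥ x)
          = (x ᵥ* Ω) ⬝ᵥ ((Ω * V⁻¹) *ᵥ x) := by
            rw [Matrix.mulVec_mulVec, Matrix.mulVec_transpose]
        _ = x ⬝ᵥ Ω *ᵥ ((Ω * V⁻¹) *ᵥ x) := (Matrix.dotProduct_mulVec _ _ _).symm
        _ = -(x ⬝ᵥ V⁻¹ *ᵥ x) := by
            rw [Matrix.mulVec_mulVec, ← Matrix.mul_assoc, hΩΩ, neg_one_mul,
              Matrix.neg_mulVec, dotProduct_neg]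
    have e4 : (V⁻¹ *ᵥ x) ⬝ᵥ Ω *ᵥ (Ωᵀ *ᵥ x) = x ⬝ᵥ V⁻¹ *ᵥ x := by
      rw [Matrix.mulVec_mulVec, hΩΩt, Matrix.one_mulVec, dotProduct_comm]
    rw [e1, e2, e3, e4] at h0
    linarith
  -- part 1 : positive semidefiniteness
  have hpart1 : (Ω * V * Ωᵀ - V⁻¹).PosSemidef := by
    refine Matrix.PosSemidef.of_dotProduct_mulVec_nonneg ?_ ?_
    · refine Matrix.IsHermitian.sub ?_ hpos.isHermitian.inv
      have hVh : V.IsHermitian := hpos.isHermitian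
      have := Matrix.isHermitian_mul_mul_conjTranspose Ω hVh
      rwa [Matrix.conjTranspose_eq_transpose_of_trivial] at this
    · intro x
      have := hkey x
      have hsx : star x = x := by
        funext j; simp
      rw [hsx, Matrix.sub_mulVec, dotProduct_sub]
      linarith
  refine ⟨hpart1, ?_⟩
  -- part 2 : norm bound
  have hbound : ∀ x : (Fin n ⊕ Fin n) → ℝ,
      x ⬝ᵥ V⁻¹ *ᵥ x ≤ ‖Matrix.toEuclideanCLM (𝕜 := ℝ) V‖ * (x ⬝ᵥ x) := by
    intro x
    refine (hkey x).trans ?_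
    have e2 : x ⬝ᵥ (Ω * V * Ωᵀ) *ᵥ x = (Ωᵀ *ᵥ x) ⬝ᵥ V *ᵥ (Ωᵀ *ᵥ x) := by
      calc x ⬝ᵥ (Ω * V * Ωᵀ) *ᵥ x
          = x ⬝ᵥ Ω *ᵥ ((V * Ωᵀ) *ᵥ x) := by
            rw [Matrix.mulVec_mulVec, ← Matrix.mul_assoc]
        _ = (x ᵥ* Ω) ⬝ᵥ ((V * Ωᵀ) *ᵥ x) := Matrix.dotProduct_mulVec _ _ _
        _ = (Ωᵀ *ᵥ x) ⬝ᵥ V *ᵥ (Ωᵀ *ᵥ x) := by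
            rw [Matrix.mulVec_mulVec, Matrix.mulVec_transpose]
    have e5 : (Ωᵀ *ᵥ x) ⬝ᵥ (Ωᵀ *ᵥ x) = x ⬝ᵥ x := by
      rw [Matrix.mulVec_transpose, ← Matrix.dotProduct_mulVec,
        Matrix.mulVec_vecMul, hΩΩt, Matrix.one_mulVec]
    rw [e2, ← e5]
    exact aux_rayleigh_le_norm V (Ωᵀ *ᵥ x)
  have hnorm : ‖Matrix.toEuclideanCLM (𝕜 := ℝ) V⁻¹‖ ≤ ‖Matrix.toEuclideanCLM (𝕜 := ℝ) V‖ :=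
    aux_clm_norm_le_of_rayleigh V⁻¹ hpos.inv.posSemidef _ (norm_nonneg _) hbound
  refine ⟨hnorm, ?_⟩
  rw [sq]
  exact mul_le_mul_of_nonneg_left hnorm (norm_nonneg _)
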